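/- Let (V_i)_{i≥1} be independent identically distributed ℤ-valued random variables with P(V_i = −1) = P(V_i = 1) = (1−r)/2 and P(V_i = 0) = r for some 0 ≤ r < 1, and set S_i = V_1 + ⋯ + V_i. Then for any positive integers a and k: 2·P(0 < S_k < a) ≤ P(max_{1 ≤ i ≤ k} S_i < a) ≤ 2·P(0 ≤ S_k ≤ a). -/

import Mathlib

open MeasureTheory ProbabilityTheory
open scoped ENNReal Classical

namespace Stmt5

noncomputable def w (r : ℝ) (z : ℤ) : ℝ≥0∞ :=
  if z = 0 then ENNReal.ofReal r
  else if z = 1 ∨ z = -1 then ENNReal.ofReal ((1 - r) / 2) else 0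

lemma w_neg (r : ℝ) (z : ℤ) : w r (-z) = w r z := by
  unfold w; split_ifs <;> first | rfl | omega

def F : Finset ℤ := {-1, 0, 1}

def D (k : ℕ) : Finset (Fin k → ℤ) := Fintype.piFinset fun _ => F

lemma mem_D {k : ℕ} {x : Fin k → ℤ} : x ∈ D k ↔ ∀ i, x i ∈ F := by
  simp [D, Fintype.mem_piFinset]

lemma neg_mem_F {z : ℤ} (h : z ∈ F) : -z ∈ F := by
  simp only [F, Finset.mem_insert, Finset.mem_singleton] at h ⊢; omega

def xe {k : ℕ} (x : Fin k → ℤ) (j : ℕ) : ℤ := if h : j < k then x ⟨j, h⟩ else 0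

def ps {k : ℕ} (x : Fin k → ℤ) (n : ℕ) : ℤ := ∑ j ∈ Finset.range n, xe x j

noncomputable def W (r : ℝ) {k : ℕ} (x : Fin k → ℤ) : ℝ≥0∞ := ∏ i, w r (x i)

lemma ps_zero {k : ℕ} (x : Fin k → ℤ) : ps x 0 = 0 := by simp [ps]

lemma ps_succ {k : ℕ} (x : Fin k → ℤ) (n : ℕ) : ps x (n + 1) = ps x n + xe x n := by
  simp [ps, Finset.sum_range_succ]

lemma xe_le_one {k : ℕ} {x : Fin k → ℤ} (hx : x ∈ D k) (j : ℕ) : xe x j ≤ 1 := by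
  unfold xe
  split_ifs with h
  · have := mem_D.1 hx ⟨j, h⟩
    simp only [F, Finset.mem_insert, Finset.mem_singleton] at this
    omega
  · omega

-- tau and reflection
noncomputable def tau (a : ℤ) {k : ℕ} (x : Fin k → ℤ) : ℕ :=
  if h : ∃ n, a ≤ ps x n then Nat.find h else 0

section tau
variable {a : ℤ} {k : ℕ} {x : Fin k → ℤ}

lemma tau_spec (h : ∃ n, a ≤ ps x n) : a ≤ ps x (tau a x) := by
  rw [tau, dif_pos h]; exact Nat.find_spec h

lemma tau_min (h : ∃ n, a ≤ ps x n) {m : ℕ} (hm : m < tau a x) : ps x m < a := by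
  rw [tau, dif_pos h] at hm
  exact lt_of_not_ge (Nat.find_min h hm)

lemma tau_le (h : ∃ n, a ≤ ps x n) {n : ℕ} (hn : a ≤ ps x n) : tau a x ≤ n := by
  rw [tau, dif_pos h]; exact Nat.find_le hn

lemma tau_pos (ha : 0 < a) (h : ∃ n, a ≤ ps x n) : 1 ≤ tau a x := by
  by_contra hc
  have h0 : tau a x = 0 := by omega
  have := tau_spec h
  rw [h0, ps_zero] at this
  omega

lemma ps_tau (hx : x ∈ D k) (ha : 0 < a) (h : ∃ n, a ≤ ps x n) : ps x (tau a x) = a := by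
  have h1 := tau_pos ha h
  obtain ⟨m, hm⟩ : ∃ m, tau a x = m + 1 := ⟨tau a x - 1, by omega⟩
  have hlt : ps x m < a := tau_min h (by omega)
  have hle := xe_le_one hx m
  have := tau_spec h
  rw [hm, ps_succ] at this ⊢
  omega

noncomputable def Rf (a : ℤ) {k : ℕ} (x : Fin k → ℤ) : Fin k → ℤ :=
  fun i => if (i : ℕ) < tau a x then x i else -(x i)

lemma Rf_mem_D (a : ℤ) (hx : x ∈ D k) : Rf a x ∈ D k := by
  refine mem_D.2 fun i => ?_
  unfold Rf
  split_ifs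
  · exact mem_D.1 hx i
  · exact neg_mem_F (mem_D.1 hx i)

lemma W_Rf (r : ℝ) (a : ℤ) (x : Fin k → ℤ) : W r (Rf a x) = W r x := by
  unfold W Rf
  refine Finset.prod_congr rfl fun i _ => ?_
  split_ifs
  · rfl
  · exact w_neg r (x i)

lemma xe_Rf_lt {j : ℕ} (hj : j < tau a x) : xe (Rf a x) j = xe x j := by
  unfold xe Rf
  split_ifs <;> simp only [Fin.val_mk] at * <;> first | rfl | omega

lemma xe_Rf_ge {j : ℕ} (hj : tau a x ≤ j) : xe (Rf a x) j = -(xe x j) := by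
  unfold xe Rf
  split_ifs <;> simp only [Fin.val_mk, neg_zero] at * <;> first | rfl | omega

lemma ps_Rf_le {n : ℕ} (hn : n ≤ tau a x) : ps (Rf a x) n = ps x n := by
  unfold ps
  refine Finset.sum_congr rfl fun j hj => ?_
  exact xe_Rf_lt (by have := Finset.mem_range.1 hj; omega)

lemma ps_Rf_add {n : ℕ} (hn : tau a x ≤ n) :
    ps (Rf a x) n + ps x n = 2 * ps x (tau a x) := by
  induction n, hn using Nat.le_induction with
  | base => rw [ps_Rf_le le_rfl]; ring
  | succ n hn ih =>
      rw [ps_succ, ps_succ, xe_Rf_ge hn]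
      omega

lemma ps_Rf_ge (hx : x ∈ D k) (ha : 0 < a) (h : ∃ n, a ≤ ps x n) {n : ℕ}
    (hn : tau a x ≤ n) : ps (Rf a x) n = 2 * a - ps x n := by
  have := ps_Rf_add hn
  rw [ps_tau hx ha h] at this
  omega

lemma tau_Rf (h : ∃ n, a ≤ ps x n) : tau a (Rf a x) = tau a x := by
  have hex : ∃ n, a ≤ ps (Rf a x) n :=
    ⟨tau a x, by rw [ps_Rf_le le_rfl]; exact tau_spec h⟩
  refine le_antisymm (tau_le hex (by rw [ps_Rf_le le_rfl]; exact tau_spec h)) ?_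
  by_contra hc
  push_neg at hc
  have h1 : ps (Rf a x) (tau a (Rf a x)) < a := by
    rw [ps_Rf_le (le_of_lt hc)]
    exact tau_min h hc
  exact absurd (tau_spec hex) (not_le.2 h1)

lemma Rf_Rf (h : ∃ n, a ≤ ps x n) : Rf a (Rf a x) = x := by
  funext i
  rw [show Rf a (Rf a x) i
      = if (i : ℕ) < tau a (Rf a x) then Rf a x i else -(Rf a x i) from rfl, tau_Rf h]
  by_cases hc : (i : ℕ) < tau a x <;> simp [Rf, hc]

end tau

lemma T_reflect (r : ℝ) {k : ℕ} (a : ℤ) (ha : 0 < a)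
    [DecidablePred fun x : Fin k → ℤ => (∃ i ∈ Finset.Icc 1 k, a ≤ ps x i) ∧ ps x k < a]
    [DecidablePred fun x : Fin k → ℤ => a < ps x k] :
    ∑ x ∈ (D k).filter (fun x => (∃ i ∈ Finset.Icc 1 k, a ≤ ps x i) ∧ ps x k < a), W r x
      = ∑ x ∈ (D k).filter (fun x => a < ps x k), W r x := by
  refine Finset.sum_nbij' (Rf a) (Rf a) ?_ ?_ ?_ ?_ ?_
  · intro x hx
    simp only [Finset.mem_filter] at hx ⊢
    obtain ⟨hxD, ⟨i, hi, hai⟩, hlt⟩ := hx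
    have h : ∃ n, a ≤ ps x n := ⟨i, hai⟩
    have htk : tau a x ≤ k := le_trans (tau_le h hai) (Finset.mem_Icc.1 hi).2
    refine ⟨Rf_mem_D a hxD, ?_⟩
    rw [ps_Rf_ge hxD ha h htk]
    omega
  · intro x hx
    simp only [Finset.mem_filter] at hx ⊢
    obtain ⟨hxD, hgt⟩ := hx
    have h : ∃ n, a ≤ ps x n := ⟨k, le_of_lt hgt⟩
    have htk : tau a x ≤ k := tau_le h (le_of_lt hgt)
    have ht1 : 1 ≤ tau a x := tau_pos ha h
    refine ⟨Rf_mem_D a hxD, ⟨tau a x, Finset.mem_Icc.2 ⟨ht1, htk⟩, ?_⟩, ?_⟩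
    · rw [ps_Rf_le le_rfl]; exact tau_spec h
    · rw [ps_Rf_ge hxD ha h htk]; omega
  · intro x hx
    simp only [Finset.mem_filter] at hx
    obtain ⟨hxD, ⟨i, hi, hai⟩, hlt⟩ := hx
    exact Rf_Rf ⟨i, hai⟩
  · intro x hx
    simp only [Finset.mem_filter] at hx
    exact Rf_Rf ⟨k, le_of_lt hx.2⟩
  · intro x hx
    exact (W_Rf r a x).symm


lemma w_eq (r : ℝ) {Ω : Type*} [MeasurableSpace Ω] (P : Measure Ω)
    (V : ℕ → Ω → ℤ)
    (hp1 : ∀ i, P {ω | V i ω = 1} = ENNReal.ofReal ((1 - r) / 2))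
    (hm1 : ∀ i, P {ω | V i ω = -1} = ENNReal.ofReal ((1 - r) / 2))
    (h0 : ∀ i, P {ω | V i ω = 0} = ENNReal.ofReal r)
    (i : ℕ) {z : ℤ} (hz : z ∈ F) : P (V i ⁻¹' {z}) = w r z := by
  have hpre : V i ⁻¹' {z} = {ω | V i ω = z} := rfl
  simp only [F, Finset.mem_insert, Finset.mem_singleton] at hz
  rcases hz with rfl | rfl | rfl
  · rw [hpre, hm1]; rfl
  · rw [hpre, h0]; rfl
  · rw [hpre, hp1]; rfl

lemma sum_w (r : ℝ) (hr0 : 0 ≤ r) (hr1 : r < 1) : ∑ z ∈ F, w r z = 1 := by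
  have h2 : (0:ℝ) ≤ (1 - r) / 2 := by linarith
  rw [show F = {-1, 0, 1} from rfl]
  rw [Finset.sum_insert (by decide), Finset.sum_insert (by decide), Finset.sum_singleton]
  have e1 : w r (-1) = ENNReal.ofReal ((1 - r) / 2) := rfl
  have e2 : w r 0 = ENNReal.ofReal r := rfl
  have e3 : w r 1 = ENNReal.ofReal ((1 - r) / 2) := rfl
  rw [e1, e2, e3, ← ENNReal.ofReal_add hr0 h2, ← ENNReal.ofReal_add h2 (by linarith),
    show (1 - r) / 2 + (r + (1 - r) / 2) = 1 by ring, ENNReal.ofReal_one]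

lemma meas_eq {Ω : Type*} [MeasurableSpace Ω] (P : Measure Ω) [IsProbabilityMeasure P]
    (r : ℝ) (hr0 : 0 ≤ r) (hr1 : r < 1)
    (V : ℕ → Ω → ℤ) (hVmeas : ∀ i, Measurable (V i))
    (hindep : iIndepFun V P)
    (hp1 : ∀ i, P {ω | V i ω = 1} = ENNReal.ofReal ((1 - r) / 2))
    (hm1 : ∀ i, P {ω | V i ω = -1} = ENNReal.ofReal ((1 - r) / 2))
    (h0 : ∀ i, P {ω | V i ω = 0} = ENNReal.ofReal r)
    (k : ℕ) (Q : (Fin k → ℤ) → Prop) [DecidablePred Q] :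
    P {ω | Q (fun i => V i ω)} = ∑ x ∈ (D k).filter Q, W r x := by
  set A : (Fin k → ℤ) → Set Ω := fun x => ⋂ i ∈ Finset.range k, V i ⁻¹' {xe x i} with hA
  have hAmem : ∀ (x : Fin k → ℤ) ω, ω ∈ A x ↔ ∀ i < k, V i ω = xe x i := by
    intro x ω
    simp [hA, Set.mem_iInter, Finset.mem_range]
  have hfunV : ∀ (x : Fin k → ℤ) ω, ω ∈ A x → (fun i : Fin k => V (i : ℕ) ω) = x := by
    intro x ω hω
    funext i
    rw [(hAmem x ω).1 hω i i.isLt]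
    simp [xe, i.isLt]
  have hAmeas : ∀ x, MeasurableSet (A x) := fun x =>
    Set.Finite.measurableSet_biInter (Finset.range k).finite_toSet
      (fun i _ => (hVmeas i) (measurableSet_singleton _))
  have hAP : ∀ x, P (A x) = ∏ i ∈ Finset.range k, P (V i ⁻¹' {xe x i}) := fun x =>
    (iIndepFun_iff_measure_inter_preimage_eq_mul.mp hindep) (Finset.range k)
      (fun i _ => measurableSet_singleton _)
  have hWx : ∀ x : Fin k → ℤ, W r x = ∏ i ∈ Finset.range k, w r (xe x i) := by
    intro x
    rw [← Fin.prod_univ_eq_prod_range (fun j => w r (xe x j)) k]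
    exact Finset.prod_congr rfl fun i _ => by simp [xe, i.isLt]
  have hAW : ∀ x ∈ D k, P (A x) = W r x := by
    intro x hx
    rw [hAP, hWx]
    refine Finset.prod_congr rfl fun i hi => ?_
    have hiK := Finset.mem_range.1 hi
    have hmem : xe x i ∈ F := by
      unfold xe; rw [dif_pos hiK]; exact mem_D.1 hx _
    exact w_eq r P V hp1 hm1 h0 i hmem
  have hdisj : (↑(D k) : Set (Fin k → ℤ)).PairwiseDisjoint A := by
    intro x _ y _ hxy
    rw [Function.onFun, Set.disjoint_left]
    intro ω hωx hωy
    exact hxy (((hfunV x ω hωx).symm.trans (hfunV y ω hωy)))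
  have hsumD : ∑ x ∈ D k, W r x = 1 := by
    have := Finset.prod_univ_sum (fun _ : Fin k => F) (fun _ z => w r z)
    rw [show D k = Fintype.piFinset fun _ : Fin k => F from rfl]
    rw [show (∑ x ∈ Fintype.piFinset fun _ : Fin k => F, W r x)
        = ∑ x ∈ Fintype.piFinset fun _ : Fin k => F, ∏ i : Fin k, w r (x i) from rfl,
      ← this, sum_w r hr0 hr1]
    simp
  have hB : P (⋃ x ∈ D k, A x) = 1 := by
    rw [measure_biUnion_finset hdisj (fun x _ => hAmeas x)]
    rw [Finset.sum_congr rfl hAW, hsumD]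
  have hBmeas : MeasurableSet (⋃ x ∈ D k, A x) :=
    (D k).measurableSet_biUnion (fun x _ => hAmeas x)
  have hBc : P (⋃ x ∈ D k, A x)ᶜ = 0 := by
    rw [measure_compl hBmeas (measure_ne_top P _), hB, measure_univ, tsub_self]
  set E : Set Ω := {ω | Q (fun i => V i ω)} with hE
  have hEB : E ∩ (⋃ x ∈ D k, A x) = ⋃ x ∈ (D k).filter Q, A x := by
    ext ω
    simp only [Set.mem_inter_iff, Set.mem_iUnion, Finset.mem_filter, exists_prop]
    constructor
    · rintro ⟨hωE, x, hxD, hωx⟩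
      refine ⟨x, ⟨hxD, ?_⟩, hωx⟩
      rw [← hfunV x ω hωx]
      exact hωE
    · rintro ⟨x, ⟨hxD, hQx⟩, hωx⟩
      refine ⟨?_, x, hxD, hωx⟩
      show Q (fun i => V i ω)
      rw [hfunV x ω hωx]
      exact hQx
  have hPE : P E = P (⋃ x ∈ (D k).filter Q, A x) := by
    refine le_antisymm ?_ ?_
    · calc P E ≤ P ((E ∩ ⋃ x ∈ D k, A x) ∪ (⋃ x ∈ D k, A x)ᶜ) := by
            refine measure_mono fun ω hω => ?_
            by_cases hωB : ω ∈ ⋃ x ∈ D k, A x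
            · exact Or.inl ⟨hω, hωB⟩
            · exact Or.inr hωB
        _ ≤ P (E ∩ ⋃ x ∈ D k, A x) + P (⋃ x ∈ D k, A x)ᶜ := measure_union_le _ _
        _ = P (⋃ x ∈ (D k).filter Q, A x) := by rw [hEB, hBc, add_zero]
    · rw [← hEB]
      exact measure_mono Set.inter_subset_left
  rw [hPE, measure_biUnion_finset (hdisj.subset (by exact_mod_cast Finset.filter_subset Q (D k)))
    (fun x _ => hAmeas x)]
  exact Finset.sum_congr rfl fun x hx => hAW x (Finset.mem_filter.1 hx).1

noncomputable def T (r : ℝ) (k : ℕ) (p : (Fin k → ℤ) → Prop) : ℝ≥0∞ :=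
  ∑ x ∈ D k, if p x then W r x else 0

lemma T_eq_filter (r : ℝ) {k : ℕ} (p : (Fin k → ℤ) → Prop) [DecidablePred p] :
    T r k p = ∑ x ∈ (D k).filter p, W r x := by
  unfold T
  rw [Finset.sum_filter]
  refine Finset.sum_congr rfl fun x _ => ?_
  by_cases hx : p x
  · rw [if_pos hx, if_pos hx]
  · rw [if_neg hx, if_neg hx]

lemma T_congr (r : ℝ) {k : ℕ} {p q : (Fin k → ℤ) → Prop} (h : ∀ x, p x ↔ q x) :
    T r k p = T r k q := by
  refine Finset.sum_congr rfl fun x _ => ?_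
  by_cases hx : p x
  · rw [if_pos hx, if_pos ((h x).1 hx)]
  · rw [if_neg hx, if_neg (fun hq => hx ((h x).2 hq))]

lemma T_mono (r : ℝ) {k : ℕ} {p q : (Fin k → ℤ) → Prop} (h : ∀ x, p x → q x) :
    T r k p ≤ T r k q := by
  refine Finset.sum_le_sum fun x _ => ?_
  by_cases hx : p x
  · rw [if_pos hx, if_pos (h x hx)]
  · rw [if_neg hx]
    exact zero_le

lemma T_split (r : ℝ) {k : ℕ} (p q : (Fin k → ℤ) → Prop) :
    T r k p = T r k (fun x => p x ∧ q x) + T r k (fun x => p x ∧ ¬ q x) := by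
  unfold T
  rw [← Finset.sum_add_distrib]
  refine Finset.sum_congr rfl fun x _ => ?_
  by_cases h1 : p x <;> by_cases h2 : q x <;> simp [h1, h2]

lemma T_total (r : ℝ) {k : ℕ} (p : (Fin k → ℤ) → Prop) :
    T r k p + T r k (fun x => ¬ p x) = ∑ x ∈ D k, W r x := by
  unfold T
  rw [← Finset.sum_add_distrib]
  refine Finset.sum_congr rfl fun x _ => ?_
  by_cases h1 : p x <;> simp [h1]

lemma W_ne_top (r : ℝ) {k : ℕ} (x : Fin k → ℤ) : W r x ≠ ⊤ := by
  have : ∀ z : ℤ, w r z ≠ ⊤ := by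
    intro z; unfold w; split_ifs <;> simp
  exact (ENNReal.prod_lt_top fun i _ => (this (x i)).lt_top).ne

lemma T_ne_top (r : ℝ) {k : ℕ} (p : (Fin k → ℤ) → Prop) : T r k p ≠ ⊤ :=
  (ENNReal.sum_lt_top.2 fun x _ =>
    lt_of_le_of_lt (by split_ifs <;> simp) (W_ne_top r x).lt_top).ne

lemma neg_mem_D {k : ℕ} {x : Fin k → ℤ} (hx : x ∈ D k) : -x ∈ D k :=
  mem_D.2 fun i => neg_mem_F (mem_D.1 hx i)

lemma xe_neg {k : ℕ} (x : Fin k → ℤ) (j : ℕ) : xe (-x) j = -(xe x j) := by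
  unfold xe; split_ifs <;> simp

lemma ps_neg {k : ℕ} (x : Fin k → ℤ) (n : ℕ) : ps (-x) n = -(ps x n) := by
  simp [ps, xe_neg]

lemma W_neg (r : ℝ) {k : ℕ} (x : Fin k → ℤ) : W r (-x) = W r x := by
  unfold W
  exact Finset.prod_congr rfl fun i _ => by rw [Pi.neg_apply, w_neg]

lemma T_neg (r : ℝ) {k : ℕ} (p : ℤ → Prop) :
    T r k (fun x => p (ps x k)) = T r k (fun x => p (-ps x k)) := by
  unfold T
  refine Finset.sum_nbij' (fun x => -x) (fun x => -x) ?_ ?_ ?_ ?_ ?_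
  · exact fun x hx => neg_mem_D hx
  · exact fun x hx => neg_mem_D hx
  · intro x _; simp
  · intro x _; simp
  · intro x _
    show (if p (ps x k) then W r x else 0) = if p (-ps (-x) k) then W r (-x) else 0
    rw [ps_neg, neg_neg, W_neg]

lemma T_reflect' (r : ℝ) {k : ℕ} (a : ℤ) (ha : 0 < a) :
    T r k (fun x => (∃ i ∈ Finset.Icc 1 k, a ≤ ps x i) ∧ ps x k < a)
      = T r k (fun x => a < ps x k) := by
  classical
  rw [T_eq_filter, T_eq_filter]
  exact T_reflect r a ha

lemma master (r : ℝ) {k : ℕ} (a : ℤ) (ha : 0 < a) (hk : 0 < k) :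
    T r k (fun x => ∀ i ∈ Finset.Icc 1 k, ps x i < a)
      = T r k (fun x => -a < ps x k ∧ ps x k ≤ a) := by
  have h1 : T r k (fun x => ps x k < a)
      = T r k (fun x => ∀ i ∈ Finset.Icc 1 k, ps x i < a)
        + T r k (fun x => (∃ i ∈ Finset.Icc 1 k, a ≤ ps x i) ∧ ps x k < a) := by
    rw [T_split r (fun x => ps x k < a) (fun x => ∀ i ∈ Finset.Icc 1 k, ps x i < a)]
    congr 1
    · refine T_congr r fun x => ?_
      constructor
      · exact fun h => h.2
      · exact fun h => ⟨h k (Finset.mem_Icc.2 ⟨hk, le_rfl⟩), h⟩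
    · refine T_congr r fun x => ?_
      constructor
      · rintro ⟨hlt, hnot⟩
        push_neg at hnot
        obtain ⟨i, hi, hge⟩ := hnot
        exact ⟨⟨i, hi, hge⟩, hlt⟩
      · rintro ⟨⟨i, hi, hge⟩, hlt⟩
        exact ⟨hlt, fun hall => absurd (hall i hi) (not_lt.2 hge)⟩
  have h2 : T r k (fun x => ps x k < a) + T r k (fun x => a ≤ ps x k)
      = ∑ x ∈ D k, W r x := by
    rw [show T r k (fun x => a ≤ ps x k) = T r k (fun x => ¬ ps x k < a) from
      T_congr r fun x => by omega]
    exact T_total r _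
  have h3 : ∑ x ∈ D k, W r x
      = T r k (fun x => ps x k ≤ -a)
        + (T r k (fun x => -a < ps x k ∧ ps x k ≤ a) + T r k (fun x => a < ps x k)) := by
    rw [← T_total r (fun x => ps x k ≤ -a)]
    congr 1
    rw [T_split r (fun x => ¬ ps x k ≤ -a) (fun x => ps x k ≤ a)]
    congr 1
    · exact T_congr r fun x => by omega
    · exact T_congr r fun x => by omega
  have h4 := T_reflect' r (k := k) a ha
  have h5 : T r k (fun x => a ≤ ps x k) = T r k (fun x => ps x k ≤ -a) := by
    rw [T_neg r (fun v => a ≤ v)]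
    exact T_congr r fun x => by omega
  have hcomb : T r k (fun x => ∀ i ∈ Finset.Icc 1 k, ps x i < a)
      + (T r k (fun x => a < ps x k) + T r k (fun x => ps x k ≤ -a))
      = T r k (fun x => -a < ps x k ∧ ps x k ≤ a)
        + (T r k (fun x => a < ps x k) + T r k (fun x => ps x k ≤ -a)) := by
    calc T r k (fun x => ∀ i ∈ Finset.Icc 1 k, ps x i < a)
        + (T r k (fun x => a < ps x k) + T r k (fun x => ps x k ≤ -a))
        = T r k (fun x => ∀ i ∈ Finset.Icc 1 k, ps x i < a)
          + (T r k (fun x => (∃ i ∈ Finset.Icc 1 k, a ≤ ps x i) ∧ ps x k < a)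
            + T r k (fun x => a ≤ ps x k)) := by rw [h4, h5]
      _ = (T r k (fun x => ∀ i ∈ Finset.Icc 1 k, ps x i < a)
          + T r k (fun x => (∃ i ∈ Finset.Icc 1 k, a ≤ ps x i) ∧ ps x k < a))
          + T r k (fun x => a ≤ ps x k) := by rw [add_assoc]
      _ = T r k (fun x => ps x k < a) + T r k (fun x => a ≤ ps x k) := by rw [h1]
      _ = ∑ x ∈ D k, W r x := h2
      _ = T r k (fun x => ps x k ≤ -a)
          + (T r k (fun x => -a < ps x k ∧ ps x k ≤ a) + T r k (fun x => a < ps x k)) := h3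
      _ = T r k (fun x => -a < ps x k ∧ ps x k ≤ a)
          + (T r k (fun x => a < ps x k) + T r k (fun x => ps x k ≤ -a)) := by
          rw [add_comm, add_assoc]
  exact (ENNReal.add_left_inj (ENNReal.add_ne_top.2 ⟨T_ne_top r _, T_ne_top r _⟩)).1 hcomb

lemma meas_eq' {Ω : Type*} [MeasurableSpace Ω] (P : Measure Ω) [IsProbabilityMeasure P]
    (r : ℝ) (hr0 : 0 ≤ r) (hr1 : r < 1)
    (V : ℕ → Ω → ℤ) (hVmeas : ∀ i, Measurable (V i))
    (hindep : iIndepFun V P)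
    (hp1 : ∀ i, P {ω | V i ω = 1} = ENNReal.ofReal ((1 - r) / 2))
    (hm1 : ∀ i, P {ω | V i ω = -1} = ENNReal.ofReal ((1 - r) / 2))
    (h0 : ∀ i, P {ω | V i ω = 0} = ENNReal.ofReal r)
    (k : ℕ) (Q : (Fin k → ℤ) → Prop) :
    P {ω | Q (fun i => V i ω)} = T r k Q := by
  classical
  rw [T_eq_filter]
  exact meas_eq P r hr0 hr1 V hVmeas hindep hp1 hm1 h0 k Q

end Stmt5

/-- For the random walk `S_i = V_1 + ⋯ + V_i` with iid steps taking values
`-1, 1` with probability `(1-r)/2` each and `0` with probability `r` (`0 ≤ r < 1`), for all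
positive integers `a, k`: `2·P(0 < S_k < a) ≤ P(max_{1 ≤ i ≤ k} S_i < a) ≤ 2·P(0 ≤ S_k ≤ a)`. -/
theorem stmt5 {Ω : Type*} [MeasurableSpace Ω] (P : Measure Ω) [IsProbabilityMeasure P]
    (r : ℝ) (hr0 : 0 ≤ r) (hr1 : r < 1)
    (V : ℕ → Ω → ℤ) (hVmeas : ∀ i, Measurable (V i))
    (hindep : iIndepFun V P)
    (hp1 : ∀ i, P {ω | V i ω = 1} = ENNReal.ofReal ((1 - r) / 2))
    (hm1 : ∀ i, P {ω | V i ω = -1} = ENNReal.ofReal ((1 - r) / 2))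
    (h0 : ∀ i, P {ω | V i ω = 0} = ENNReal.ofReal r)
    (S : ℕ → Ω → ℤ) (hS : ∀ k ω, S k ω = ∑ i ∈ Finset.range k, V i ω)
    (a k : ℕ) (ha : 0 < a) (hk : 0 < k) :
    2 * P {ω | 0 < S k ω ∧ S k ω < (a : ℤ)} ≤ P {ω | ∀ i ∈ Finset.Icc 1 k, S i ω < (a : ℤ)} ∧
      P {ω | ∀ i ∈ Finset.Icc 1 k, S i ω < (a : ℤ)} ≤
        2 * P {ω | 0 ≤ S k ω ∧ S k ω ≤ (a : ℤ)} := by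
  have ha' : (0:ℤ) < (a:ℤ) := by exact_mod_cast ha
  have key : ∀ (ω : Ω) (n : ℕ), n ≤ k → Stmt5.ps (fun i : Fin k => V i ω) n = S n ω := by
    intro ω n hn
    rw [hS]
    refine Finset.sum_congr rfl fun j hj => ?_
    have hj' : j < k := lt_of_lt_of_le (Finset.mem_range.1 hj) hn
    simp [Stmt5.xe, hj']
  have e1 : P {ω | 0 < S k ω ∧ S k ω < (a:ℤ)}
      = Stmt5.T r k (fun x => 0 < Stmt5.ps x k ∧ Stmt5.ps x k < (a:ℤ)) := by
    rw [show {ω | 0 < S k ω ∧ S k ω < (a:ℤ)}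
        = {ω | (fun x : Fin k → ℤ => 0 < Stmt5.ps x k ∧ Stmt5.ps x k < (a:ℤ))
            (fun i => V i ω)} by
      ext ω; simp only [Set.mem_setOf_eq, key ω k le_rfl]]
    exact Stmt5.meas_eq' P r hr0 hr1 V hVmeas hindep hp1 hm1 h0 k
      (fun x : Fin k → ℤ => 0 < Stmt5.ps x k ∧ Stmt5.ps x k < (a:ℤ))
  have e3 : P {ω | 0 ≤ S k ω ∧ S k ω ≤ (a:ℤ)}
      = Stmt5.T r k (fun x => 0 ≤ Stmt5.ps x k ∧ Stmt5.ps x k ≤ (a:ℤ)) := by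
    rw [show {ω | 0 ≤ S k ω ∧ S k ω ≤ (a:ℤ)}
        = {ω | (fun x : Fin k → ℤ => 0 ≤ Stmt5.ps x k ∧ Stmt5.ps x k ≤ (a:ℤ))
            (fun i => V i ω)} by
      ext ω; simp only [Set.mem_setOf_eq, key ω k le_rfl]]
    exact Stmt5.meas_eq' P r hr0 hr1 V hVmeas hindep hp1 hm1 h0 k
      (fun x : Fin k → ℤ => 0 ≤ Stmt5.ps x k ∧ Stmt5.ps x k ≤ (a:ℤ))
  have e2 : P {ω | ∀ i ∈ Finset.Icc 1 k, S i ω < (a:ℤ)}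
      = Stmt5.T r k (fun x => ∀ i ∈ Finset.Icc 1 k, Stmt5.ps x i < (a:ℤ)) := by
    rw [show {ω | ∀ i ∈ Finset.Icc 1 k, S i ω < (a:ℤ)}
        = {ω | (fun x : Fin k → ℤ => ∀ i ∈ Finset.Icc 1 k, Stmt5.ps x i < (a:ℤ))
            (fun i => V i ω)} by
      ext ω
      simp only [Set.mem_setOf_eq]
      constructor
      · intro h i hi
        rw [key ω i (Finset.mem_Icc.1 hi).2]
        exact h i hi
      · intro h i hi
        have := h i hi
        rwa [key ω i (Finset.mem_Icc.1 hi).2] at this]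
    exact Stmt5.meas_eq' P r hr0 hr1 V hVmeas hindep hp1 hm1 h0 k
      (fun x : Fin k → ℤ => ∀ i ∈ Finset.Icc 1 k, Stmt5.ps x i < (a:ℤ))
  have hsplit := Stmt5.T_split r
    (fun x : Fin k → ℤ => -(a:ℤ) < Stmt5.ps x k ∧ Stmt5.ps x k ≤ (a:ℤ))
    (fun x => Stmt5.ps x k ≤ 0)
  constructor
  · rw [e1, e2, Stmt5.master r (a:ℤ) ha' hk, two_mul, hsplit]
    refine add_le_add ?_ ?_
    · rw [show Stmt5.T r k (fun x => 0 < Stmt5.ps x k ∧ Stmt5.ps x k < (a:ℤ))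
          = Stmt5.T r k (fun x => 0 < -Stmt5.ps x k ∧ -Stmt5.ps x k < (a:ℤ)) from
        Stmt5.T_neg r (fun v => 0 < v ∧ v < (a:ℤ))]
      exact Stmt5.T_mono r fun x h => by
        refine ⟨⟨by omega, by omega⟩, by omega⟩
    · exact Stmt5.T_mono r fun x h => by
        refine ⟨⟨by omega, by omega⟩, by omega⟩
  · rw [e2, e3, Stmt5.master r (a:ℤ) ha' hk, two_mul, hsplit]
    refine add_le_add ?_ ?_
    · exact le_trans (Stmt5.T_mono r fun x h => ⟨by omega, by omega⟩)
        (le_of_eq (Stmt5.T_neg r (fun v => 0 ≤ v ∧ v ≤ (a:ℤ))).symm)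
    · exact Stmt5.T_mono r fun x h => ⟨by omega, by omega⟩
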